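/- If p is prime and k ≥ 3, the number of multisets {o_1,...,o_k} of elements of (Z/pZ) \ {0} with o_1 + ... + o_k ≡ 0 (mod p) equals (1/p)(C(p+k-2, k) + (p-1)δ(k)), where δ(k) = 1 if k ≡ 0 mod p, δ(k) = -1 if k ≡ 1 mod p, and δ(k) = 0 otherwise. -/

import Mathlib

open Finset

noncomputable section

namespace CZS

variable {β : Type*} [DecidableEq β]

/-- weight of a symmetric power element -/
def wt (f : β → ℂ) {n : ℕ} (s : Sym β n) : ℂ := ((s : Multiset β).map f).prod

/-- complete homogeneous sum over multisets from `A` -/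
def T (f : β → ℂ) (A : Finset β) (n : ℕ) : ℂ := ∑ s ∈ A.sym n, wt f s

lemma wt_fill (f : β → ℂ) {n : ℕ} (a : β) (i : Fin (n+1)) (m : Sym β (n - i)) :
    wt f (m.fill a i) = f a ^ (i : ℕ) * wt f m := by
  simp only [wt, Sym.coe_fill, Multiset.map_add, Multiset.prod_add, Multiset.map_replicate,
    Multiset.prod_replicate, Sym.coe_replicate]
  ring

lemma T_insert (f : β → ℂ) (A : Finset β) {a : β} (ha : a ∉ A) (n : ℕ) :
    T f (insert a A) n = ∑ i ∈ range (n+1), f a ^ i * T f A (n - i) := by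
  classical
  rw [T, ← Finset.sum_coe_sort]
  rw [← Fintype.sum_equiv (Finset.symInsertEquiv ha).symm
    (fun (x : Σ i : Fin (n+1), ↥(A.sym (n - i))) => f a ^ (x.1 : ℕ) * wt f (x.2 : Sym β (n - x.1)))
    (fun s : ↥((insert a A).sym n) => wt f (s : Sym β n))
    (fun x => by
      simp only [Finset.symInsertEquiv_symm_apply_coe]
      exact (wt_fill f a x.1 x.2).symm)]
  rw [← Finset.univ_sigma_univ, Finset.sum_sigma]
  trans ∑ i : Fin (n+1), f a ^ (i:ℕ) * T f A (n - i)
  · refine Finset.sum_congr rfl fun i _ => ?_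
    show ∑ s : {x // x ∈ A.sym (n - (i:ℕ))}, f a ^ (i:ℕ) * wt f (s : Sym β (n - (i:ℕ))) = _
    rw [← Finset.mul_sum, Finset.sum_coe_sort (A.sym (n - (i:ℕ))) (wt f), T]
  · exact Fin.sum_univ_eq_sum_range (fun i => f a ^ i * T f A (n - i)) (n+1)


open PowerSeries in
lemma geom_inv (c : ℂ) :
    (1 - PowerSeries.C c * PowerSeries.X) * PowerSeries.mk (fun n => c ^ n) = 1 := by
  ext n
  rw [sub_mul, one_mul, map_sub, mul_assoc]
  cases n with
  | zero => simp
  | succ m =>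
    rw [PowerSeries.coeff_C_mul, PowerSeries.coeff_mk]
    rw [show ((m:ℕ)+1) = m + 1 from rfl, PowerSeries.coeff_succ_X_mul, PowerSeries.coeff_mk]
    simp [pow_succ, mul_comm]

open PowerSeries in
lemma ps_inverse (f : β → ℂ) (A : Finset β) :
    (∏ a ∈ A, (1 - PowerSeries.C (f a) * PowerSeries.X)) * PowerSeries.mk (T f A) = 1 := by
  classical
  induction A using Finset.induction_on with
  | empty =>
    rw [Finset.prod_empty, one_mul]
    ext n
    cases n with
    | zero =>
      rw [PowerSeries.coeff_mk]
      simp only [T, Finset.sym_zero, Finset.sum_singleton, wt]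
      rw [show ((∅ : Sym β 0) : Multiset β) = 0 from rfl]
      simp
    | succ m => simp [PowerSeries.coeff_mk, T, wt]
  | @insert a A ha ih =>
    have hmk : PowerSeries.mk (T f (insert a A)) =
        PowerSeries.mk (fun n => f a ^ n) * PowerSeries.mk (T f A) := by
      ext n
      rw [PowerSeries.coeff_mk, PowerSeries.coeff_mul, T_insert f A ha n,
        Finset.Nat.sum_antidiagonal_eq_sum_range_succ_mk]
      simp
    rw [Finset.prod_insert ha, hmk, mul_comm (1 - PowerSeries.C (f a) * PowerSeries.X),
      mul_assoc, ← mul_assoc (1 - PowerSeries.C (f a) * PowerSeries.X), geom_inv, one_mul, ih]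

end CZS
open Finset PowerSeries
namespace CZS

def eps (p : ℕ) : ℕ → ℂ := fun n => if n % p = 0 then 1 else 0
def del (p : ℕ) : ℕ → ℂ := fun n => if n % p = 0 then 1 else if n % p = 1 then -1 else 0

lemma one_sub_Xp_mul_eps {p : ℕ} (hp : 2 ≤ p) :
    ((1 - X ^ p) * PowerSeries.mk (eps p) : PowerSeries ℂ) = 1 := by
  ext n
  rw [sub_mul, one_mul, map_sub, PowerSeries.coeff_X_pow_mul', PowerSeries.coeff_one]
  simp only [PowerSeries.coeff_mk, eps]
  by_cases h1 : p ≤ n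
  · have h2 : (n - p) % p = n % p := by
      conv_rhs => rw [← Nat.sub_add_cancel h1]
      rw [Nat.add_mod_right]
    rw [if_pos h1, h2, sub_self, if_neg (by omega)]
  · rw [if_neg h1, sub_zero]
    by_cases h3 : n = 0
    · subst h3; simp
    · rw [if_neg (by rw [Nat.mod_eq_of_lt (by omega)]; exact h3), if_neg h3]

lemma mk_del_eq {p : ℕ} (hp : 2 ≤ p) :
    (PowerSeries.mk (del p) : PowerSeries ℂ) = (1 - X) * PowerSeries.mk (eps p) := by
  ext n
  rw [sub_mul, one_mul, map_sub, show (X : PowerSeries ℂ) = X ^ 1 by rw [pow_one],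
    PowerSeries.coeff_X_pow_mul']
  simp only [PowerSeries.coeff_mk, del, eps]
  cases n with
  | zero => simp
  | succ m =>
    rw [if_pos (by omega : 1 ≤ m + 1), Nat.add_sub_cancel]
    have h2 : m % p < p := Nat.mod_lt _ (by omega)
    have h1 : (m + 1) % p = (m % p + 1) % p := by
      conv_lhs => rw [Nat.add_mod, Nat.one_mod_eq_one.mpr (by omega : p ≠ 1)]
    by_cases hc : m % p + 1 = p
    · have e0 : (m + 1) % p = 0 := by rw [h1, hc, Nat.mod_self]
      have e1 : m % p ≠ 0 := by omega
      rw [e0, if_pos rfl, if_pos rfl, if_neg e1, sub_zero]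
    · have e0 : (m + 1) % p = m % p + 1 := by rw [h1, Nat.mod_eq_of_lt (by omega)]
      rw [e0, if_neg (by omega)]
      by_cases hr : m % p = 0
      · rw [if_pos (by omega), if_neg (by omega), if_pos hr]
        norm_num
      · rw [if_neg (by omega), if_neg (by omega), if_neg hr, sub_zero]

end CZS

namespace CZS

def Qps (p : ℕ) : PowerSeries ℂ := ∑ i ∈ Finset.range p, X ^ i

lemma Q_mul_del {p : ℕ} (hp : 2 ≤ p) : Qps p * PowerSeries.mk (del p) = 1 := by
  rw [mk_del_eq hp, ← mul_assoc, mul_comm (Qps p) (1 - X), Qps,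
    mul_neg_geom_sum, one_sub_Xp_mul_eps hp]

lemma eq_del {p : ℕ} {T : ℕ → ℂ} (hp : 2 ≤ p) (h : Qps p * PowerSeries.mk T = 1) (n : ℕ) :
    T n = del p n := by
  have key : PowerSeries.mk T = PowerSeries.mk (del p) := by
    calc PowerSeries.mk T = (Qps p * PowerSeries.mk (del p)) * PowerSeries.mk T := by
          rw [Q_mul_del hp, one_mul]
    _ = (Qps p * PowerSeries.mk T) * PowerSeries.mk (del p) := by ring
    _ = PowerSeries.mk (del p) := by rw [h, one_mul]
  simpa using congrArg (PowerSeries.coeff n) key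

end CZS
open Finset
namespace CZS

lemma prod_one_sub_zX {p : ℕ} (hp : 0 < p) {z : ℂ} (hz : IsPrimitiveRoot z p) :
    ∏ i ∈ Finset.range p, (1 - Polynomial.C (z ^ i) * Polynomial.X) =
      1 - Polynomial.X ^ p := by
  apply Polynomial.funext; intro x
  simp only [Polynomial.eval_prod, Polynomial.eval_sub, Polynomial.eval_one, Polynomial.eval_mul,
    Polynomial.eval_C, Polynomial.eval_X, Polynomial.eval_pow]
  by_cases hx : x = 0
  · subst hx; simp [zero_pow hp.ne']
  · have h1 : ∀ i : ℕ, 1 - z ^ i * x = (-x) * (z ^ i - x⁻¹) := by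
      intro i; field_simp; ring
    calc ∏ i ∈ Finset.range p, (1 - z ^ i * x)
        = ∏ i ∈ Finset.range p, ((-x) * (z ^ i - x⁻¹)) :=
          Finset.prod_congr rfl fun i _ => h1 i
      _ = (-x) ^ p * ∏ i ∈ Finset.range p, (z ^ i - x⁻¹) := by
          rw [Finset.prod_mul_distrib, Finset.prod_const, Finset.card_range]
      _ = (-x) ^ p * ∏ i ∈ Finset.range p, ((-1 : ℂ) * (x⁻¹ - z ^ i)) := by
          congr 1; exact Finset.prod_congr rfl fun i _ => by ring
      _ = (-x) ^ p * ((-1 : ℂ) ^ p * ∏ i ∈ Finset.range p, (x⁻¹ - z ^ i)) := by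
          rw [Finset.prod_mul_distrib, Finset.prod_const, Finset.card_range]
      _ = x ^ p * ((x⁻¹) ^ p - 1) := by
          have he := congrArg (Polynomial.eval x⁻¹)
            (X_pow_sub_C_eq_prod hz hp (one_pow p))
          simp only [Polynomial.eval_prod, Polynomial.eval_sub, Polynomial.eval_one,
            Polynomial.eval_C, Polynomial.eval_X, Polynomial.eval_pow, map_one, mul_one] at he
          rw [← he, ← mul_assoc, ← mul_pow]; ring_nf
      _ = 1 - x ^ p := by
          rw [mul_sub, ← mul_pow, mul_inv_cancel₀ hx]; simp

end CZS

namespace CZS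

lemma prod_zmod_eq {p : ℕ} [NeZero p] {z : ℂ} (hz : IsPrimitiveRoot z p) :
    ∏ a : ZMod p, (1 - Polynomial.C (z ^ a.val) * Polynomial.X) =
      ∏ i ∈ Finset.range p, (1 - Polynomial.C (z ^ i) * Polynomial.X) := by
  refine Finset.prod_nbij' (fun a => a.val) (fun i => (i : ZMod p)) ?_ ?_ ?_ ?_ ?_
  · intro a _; exact Finset.mem_range.mpr (ZMod.val_lt a)
  · intro i _; exact Finset.mem_univ _
  · intro a _; simp [ZMod.natCast_val, ZMod.cast_id]
  · intro i hi; exact ZMod.val_cast_of_lt (Finset.mem_range.mp hi)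
  · intro a _; rfl

lemma prod_nonzero_eq_geom {p : ℕ} [NeZero p] (hp : p.Prime) {z : ℂ}
    (hz : IsPrimitiveRoot z p) :
    ∏ a : {x : ZMod p // x ≠ 0}, (1 - Polynomial.C (z ^ (a.1.val)) * Polynomial.X) =
      ∑ i ∈ Finset.range p, Polynomial.X ^ i := by
  have h0 := Finset.mul_prod_erase Finset.univ
    (fun a : ZMod p => 1 - Polynomial.C (z ^ a.val) * Polynomial.X) (Finset.mem_univ 0)
  have hsub : ∏ a ∈ Finset.univ.erase (0 : ZMod p),
        (1 - Polynomial.C (z ^ a.val) * Polynomial.X)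
      = ∏ a : {x : ZMod p // x ≠ 0}, (1 - Polynomial.C (z ^ (a.1.val)) * Polynomial.X) :=
    Finset.prod_subtype _ (fun x => by simp) _
  have hF0 : (1 : Polynomial ℂ) - Polynomial.C (z ^ (0 : ZMod p).val) * Polynomial.X
      = 1 - Polynomial.X := by
    simp [ZMod.val_zero]
  have hcancel : (1 - Polynomial.X : Polynomial ℂ) ≠ 0 := by
    intro h
    have := congrArg (fun q => Polynomial.coeff q 1) h
    simp [Polynomial.coeff_one] at this
  apply mul_left_cancel₀ hcancel
  calc (1 - Polynomial.X) *
        ∏ a : {x : ZMod p // x ≠ 0}, (1 - Polynomial.C (z ^ (a.1.val)) * Polynomial.X)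
      = ∏ a : ZMod p, (1 - Polynomial.C (z ^ a.val) * Polynomial.X) := by
        rw [← hF0, ← hsub]; exact h0
    _ = 1 - Polynomial.X ^ p := by rw [prod_zmod_eq hz]; exact prod_one_sub_zX hp.pos hz
    _ = (1 - Polynomial.X) * ∑ i ∈ Finset.range p, Polynomial.X ^ i :=
        (mul_neg_geom_sum _ _).symm

end CZS
open Finset
namespace CZS

lemma ch_add {p : ℕ} [NeZero p] {z : ℂ} (hz1 : z ^ p = 1) (x y : ZMod p) :
    z ^ (x + y).val = z ^ x.val * z ^ y.val := by
  rw [ZMod.val_add, ← pow_eq_pow_mod _ hz1, pow_add]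

lemma ch_sum {p : ℕ} [NeZero p] {z : ℂ} (hz1 : z ^ p = 1) (s : Multiset (ZMod p)) :
    z ^ s.sum.val = (s.map (fun x => z ^ x.val)).prod := by
  induction s using Multiset.induction_on with
  | empty => simp [ZMod.val_zero]
  | cons a s ih => rw [Multiset.sum_cons, ch_add hz1, ih, Multiset.map_cons, Multiset.prod_cons]

lemma orthogonality {p : ℕ} [NeZero p] (hp : p.Prime) {ζ : ℂ} (hζ : IsPrimitiveRoot ζ p)
    (m : ZMod p) :
    ∑ j ∈ Finset.range p, (ζ ^ j) ^ m.val = if m = 0 then (p : ℂ) else 0 := by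
  by_cases hm : m = 0
  · subst hm
    simp [ZMod.val_zero]
  · rw [if_neg hm]
    have hv : m.val ≠ 0 := fun h => hm ((ZMod.val_eq_zero m).mp h)
    have hco : (m.val).Coprime p :=
      Nat.Coprime.symm <| (Nat.Prime.coprime_iff_not_dvd hp).mpr
        (Nat.not_dvd_of_pos_of_lt (Nat.pos_of_ne_zero hv) (ZMod.val_lt m))
    have hprim : IsPrimitiveRoot (ζ ^ m.val) p := hζ.pow_of_coprime _ hco
    calc ∑ j ∈ Finset.range p, (ζ ^ j) ^ m.val
        = ∑ j ∈ Finset.range p, (ζ ^ m.val) ^ j := by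
          refine Finset.sum_congr rfl fun j _ => ?_
          rw [← pow_mul, ← pow_mul, mul_comm]
    _ = 0 := hprim.geom_sum_eq_zero hp.one_lt

end CZS

namespace CZS

lemma card_NZ {p : ℕ} [NeZero p] : Fintype.card {x : ZMod p // x ≠ 0} = p - 1 := by
  have h1 : Fintype.card {x : ZMod p // x ≠ 0}
      = Fintype.card (ZMod p) - Fintype.card {x : ZMod p // x = 0} :=
    Fintype.card_subtype_compl _
  rw [h1, ZMod.card, Fintype.card_subtype_eq (0 : ZMod p)]

lemma main_count (p k : ℕ) [NeZero p] (hp : p.Prime) :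
    (p : ℂ) * ((Finset.univ.filter (fun s : Sym {x : ZMod p // x ≠ 0} k =>
        ((s : Multiset {x : ZMod p // x ≠ 0}).map Subtype.val).sum = 0)).card : ℂ)
      = ((p + k - 2).choose k : ℂ) + ((p : ℂ) - 1) * del p k := by
  classical
  set α := {x : ZMod p // x ≠ 0} with hα
  set ζ : ℂ := Complex.exp (2 * Real.pi * Complex.I / p) with hζdef
  have hζ : IsPrimitiveRoot ζ p := Complex.isPrimitiveRoot_exp p (NeZero.ne p)
  have hz1 : ∀ j : ℕ, (ζ ^ j) ^ p = 1 := fun j => by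
    rw [← pow_mul, mul_comm, pow_mul, hζ.pow_eq_one, one_pow]
  set msum : Sym α k → ZMod p :=
    fun s => ((s : Multiset α).map Subtype.val).sum with hmsum
  set f : ℕ → α → ℂ := fun j a => (ζ ^ j) ^ (a.1.val) with hf
  have hterm : ∀ (j : ℕ) (s : Sym α k), wt (f j) s = (ζ ^ j) ^ (msum s).val := by
    intro j s
    rw [hmsum, ch_sum (hz1 j), Multiset.map_map]
    rfl
  have hT : ∀ j : ℕ, T (f j) Finset.univ k
      = ∑ s ∈ (Finset.univ : Finset (Sym α k)), (ζ ^ j) ^ (msum s).val := by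
    intro j
    rw [T, Finset.sym_univ]
    exact Finset.sum_congr rfl fun s _ => hterm j s
  -- the T value for j = 0
  have hT0 : T (f 0) Finset.univ k = ((p + k - 2).choose k : ℂ) := by
    rw [T, Finset.sym_univ]
    have : ∀ s : Sym α k, wt (f 0) s = 1 := by
      intro s
      rw [hterm 0 s, pow_zero, one_pow]
    rw [Finset.sum_congr rfl fun s _ => this s, Finset.sum_const, Finset.card_univ,
      Sym.card_sym_eq_multichoose, card_NZ, Nat.multichoose_eq, nsmul_eq_mul, mul_one]
    congr 2
    have := hp.two_le
    omega
  -- the T value for 1 ≤ j < p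
  have hTj : ∀ j ∈ Finset.Ico 1 p, T (f j) Finset.univ k = del p k := by
    intro j hj
    rw [Finset.mem_Ico] at hj
    have hco : j.Coprime p := Nat.Coprime.symm <| (Nat.Prime.coprime_iff_not_dvd hp).mpr
      (Nat.not_dvd_of_pos_of_lt (by omega) hj.2)
    have hjprim : IsPrimitiveRoot (ζ ^ j) p := hζ.pow_of_coprime j hco
    have h2 := prod_nonzero_eq_geom hp hjprim
    have h3 := congrArg (Polynomial.coeToPowerSeries.ringHom (R := ℂ)) h2
    rw [map_prod, map_sum] at h3
    simp only [Polynomial.coeToPowerSeries.ringHom_apply, Polynomial.coe_sub, Polynomial.coe_one,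
      Polynomial.coe_mul, Polynomial.coe_C, Polynomial.coe_X, Polynomial.coe_pow] at h3
    have h4 := ps_inverse (f j) (Finset.univ : Finset α)
    rw [hf] at h4
    rw [h3] at h4
    exact eq_del hp.two_le h4 k
  -- orthogonality-based double counting
  calc (p : ℂ) * ((Finset.univ.filter (fun s : Sym α k => msum s = 0)).card : ℂ)
      = ∑ s ∈ (Finset.univ : Finset (Sym α k)), (if msum s = 0 then (p : ℂ) else 0) := by
        rw [Finset.sum_ite, Finset.sum_const, Finset.sum_const_zero, add_zero, nsmul_eq_mul,
          mul_comm]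
    _ = ∑ s ∈ (Finset.univ : Finset (Sym α k)), ∑ j ∈ Finset.range p, (ζ ^ j) ^ (msum s).val :=
        Finset.sum_congr rfl fun s _ => (orthogonality hp hζ (msum s)).symm
    _ = ∑ j ∈ Finset.range p, ∑ s ∈ (Finset.univ : Finset (Sym α k)), (ζ ^ j) ^ (msum s).val :=
        Finset.sum_comm
    _ = ∑ j ∈ Finset.range p, T (f j) Finset.univ k :=
        Finset.sum_congr rfl fun j _ => (hT j).symm
    _ = T (f 0) Finset.univ k + ∑ j ∈ Finset.Ico 1 p, T (f j) Finset.univ k := by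
        rw [Finset.range_eq_Ico, Finset.sum_eq_sum_Ico_succ_bot hp.pos]
    _ = ((p + k - 2).choose k : ℂ) + ((p : ℂ) - 1) * del p k := by
        rw [hT0, Finset.sum_congr rfl hTj, Finset.sum_const, Nat.card_Ico, nsmul_eq_mul]
        congr 2
        have := hp.two_le
        push_cast [Nat.cast_sub (by omega : 1 ≤ p)]
        ring

end CZS

open CZS in
/-- The count of multisets of size `k` of nonzero residues mod a prime `p` summing
to `0`. -/
theorem count_zero_sum_multisets (p k : ℕ) (hp : p.Prime) (hk : 3 ≤ k) :
    (({s : Multiset (ZMod p) | Multiset.card s = k ∧ (∀ x ∈ s, x ≠ 0) ∧ s.sum = 0}.ncard : ℚ)) =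
      (1 / (p : ℚ)) * (((p + k - 2).choose k : ℚ) +
        ((p : ℚ) - 1) * (if k % p = 0 then 1 else if k % p = 1 then -1 else 0)) := by
  classical
  haveI : NeZero p := ⟨hp.ne_zero⟩
  set α := {x : ZMod p // x ≠ 0} with hα
  set emb : Sym α k → Multiset (ZMod p) :=
    fun s => (s : Multiset α).map Subtype.val with hemb
  have hembinj : Function.Injective emb := by
    intro s t h
    exact Sym.coe_injective (Multiset.map_injective Subtype.val_injective h)
  set F : Finset (Sym α k) := Finset.univ.filter
    (fun s : Sym α k => ((s : Multiset α).map Subtype.val).sum = 0) with hF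
  have hset : {s : Multiset (ZMod p) | Multiset.card s = k ∧ (∀ x ∈ s, x ≠ 0) ∧ s.sum = 0}
      = ↑(F.image emb) := by
    ext s
    simp only [Set.mem_setOf_eq, Finset.coe_image, Set.mem_image, Finset.mem_coe,
      Finset.mem_filter, Finset.mem_univ, true_and, hF]
    constructor
    · rintro ⟨hcard, hnz, hsum⟩
      refine ⟨⟨s.attach.map (fun x => (⟨x.1, hnz x.1 x.2⟩ : α)), ?_⟩, ?_, ?_⟩
      · rw [Multiset.card_map, Multiset.card_attach, hcard]
      · show ((s.attach.map (fun x => (⟨x.1, hnz x.1 x.2⟩ : α))).map Subtype.val).sum = 0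
        rw [Multiset.map_map]
        simp only [Function.comp]
        rw [Multiset.attach_map_val]
        exact hsum
      · show (s.attach.map (fun x => (⟨x.1, hnz x.1 x.2⟩ : α))).map Subtype.val = s
        rw [Multiset.map_map]
        simp only [Function.comp]
        rw [Multiset.attach_map_val]
    · rintro ⟨σ, hσ, rfl⟩
      refine ⟨?_, ?_, hσ⟩
      · rw [hemb]
        simp only [Multiset.card_map]
        exact σ.2
      · intro x hx
        rw [hemb] at hx
        simp only [Multiset.mem_map] at hx
        obtain ⟨a, _, rfl⟩ := hx
        exact a.2
  have hncard : {s : Multiset (ZMod p) | Multiset.card s = k ∧ (∀ x ∈ s, x ≠ 0) ∧ s.sum = 0}.ncard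
      = F.card := by
    rw [hset, Set.ncard_coe_finset, Finset.card_image_of_injective _ hembinj]
  rw [hncard]
  set d : ℚ := if k % p = 0 then 1 else if k % p = 1 then -1 else 0 with hd
  have hdel : del p k = ((d : ℚ) : ℂ) := by
    rw [del, hd]
    split_ifs <;> norm_num
  have hmain := main_count p k hp
  rw [hdel] at hmain
  have hQ : (p : ℚ) * (F.card : ℚ) = ((p + k - 2).choose k : ℚ) + ((p : ℚ) - 1) * d := by
    exact_mod_cast hmain
  have hp0 : (p : ℚ) ≠ 0 := Nat.cast_ne_zero.mpr hp.ne_zero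
  rw [← hQ]
  field_simp
end
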